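/- There exists a constant C > 0 with the following property: for every ε ∈ (0,1), every m ≥ 1, every finite set Y ⊆ ℝ^m with |Y| ≥ 2, and every natural number K ≥ C·ε⁻²·ln|Y|, there exists a function f : ℝ^m → ℝ^K such that for all x, y ∈ Y, (1−ε)‖x−y‖₂ ≤ ‖f(x)−f(y)‖₂ ≤ (1+ε)‖x−y‖₂. -/

import Mathlib

open Real MeasureTheory Finset

noncomputable section JLaux

/-- sign of a Bool as a real. -/
def sg (b : Bool) : ℝ := if b then 1 else -1

lemma sg_sq (b : Bool) : sg b ^ 2 = 1 := by cases b <;> simp [sg]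

lemma sg_abs (b : Bool) : |sg b| = 1 := by cases b <;> simp [sg]

/-- master product lemma: expectation over product space factorizes. -/
lemma master {ι : Type*} [Fintype ι] [DecidableEq ι] {β : Type*} [Fintype β]
    (h : ι → β → ℝ) :
    ∑ w : ι → β, ∏ i, h i (w i) = ∏ i, ∑ b, h i b := by
  rw [Fintype.prod_sum]

/-- X : the Rademacher linear form. -/
def Xf {m : ℕ} (a : Fin m → ℝ) (w : Fin m → Bool) : ℝ := ∑ j, sg (w j) * a j

lemma sum_exp_mul_X {m : ℕ} (a : Fin m → ℝ) (c : ℝ) :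
    ∑ w : Fin m → Bool, Real.exp (c * Xf a w) = ∏ j, (Real.exp (c * a j) + Real.exp (-(c * a j))) := by
  have : ∀ w : Fin m → Bool, Real.exp (c * Xf a w) = ∏ j, Real.exp (c * (sg (w j) * a j)) := by
    intro w
    rw [← Real.exp_sum, Xf, Finset.mul_sum]
  simp_rw [this]
  rw [master (fun j b => Real.exp (c * (sg b * a j)))]
  congr 1; ext j
  simp [sg, Fintype.sum_bool, add_comm, mul_comm]

def Qf {m K : ℕ} (a : Fin m → ℝ) (ω : Fin K → Fin m → Bool) : ℝ := ∑ i, (Xf a (ω i))^2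

variable {m K : ℕ} {a : Fin m → ℝ} {ε : ℝ}

/-- mgf of the Rademacher linear form, assuming unit norm. -/
lemma sum_exp_mul_X_le (ha : ∑ j, (a j)^2 = 1) (c : ℝ) :
    ∑ w : Fin m → Bool, Real.exp (c * Xf a w) ≤ 2^m * Real.exp (c^2/2) := by
  have key : ∑ w : Fin m → Bool, Real.exp (c * Xf a w)
      = ∏ j, (Real.exp (c * a j) + Real.exp (-(c * a j))) := sum_exp_mul_X a c
  rw [key]
  have h1 : ∀ j, Real.exp (c * a j) + Real.exp (-(c * a j))
      ≤ 2 * Real.exp ((c * a j)^2 / 2) := by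
    intro j
    have := Real.cosh_le_exp_half_sq (c * a j)
    rw [Real.cosh_eq] at this
    linarith
  calc ∏ j, (Real.exp (c * a j) + Real.exp (-(c * a j)))
      ≤ ∏ j, 2 * Real.exp ((c * a j)^2 / 2) := by
        apply Finset.prod_le_prod
        · intro j _; positivity
        · intro j _; exact h1 j
    _ = 2^m * Real.exp (∑ j, (c * a j)^2 / 2) := by
        rw [Finset.prod_mul_distrib, Finset.prod_const, Real.exp_sum]
        simp
    _ = 2^m * Real.exp (c^2/2) := by
        congr 2
        rw [← Finset.sum_div]
        congr 1
        simp_rw [mul_pow, ← Finset.mul_sum, ha, mul_one]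

lemma sum_sg_pair (j k : Fin m) :
    ∑ w : Fin m → Bool, sg (w j) * sg (w k) = if j = k then 2^m else 0 := by
  have key : ∀ w : Fin m → Bool,
      sg (w j) * sg (w k) = ∏ i, ((if i = j then sg (w i) else 1) * (if i = k then sg (w i) else 1)) := by
    intro w
    rw [Finset.prod_mul_distrib, Finset.prod_ite_eq' Finset.univ j (fun i => sg (w i)),
      Finset.prod_ite_eq' Finset.univ k (fun i => sg (w i))]
    simp
  simp_rw [key]
  rw [master (fun i b => (if i = j then sg b else 1) * (if i = k then sg b else 1))]
  by_cases hjk : j = k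
  · subst hjk
    simp only [if_pos rfl]
    rw [Finset.prod_eq_pow_card (b := 2)]
    · norm_num
    · intro i _
      by_cases hij : i = j
      · subst hij; simp [sg, Fintype.sum_bool]; norm_num
      · simp [hij, Fintype.sum_bool]
  · rw [if_neg hjk]
    apply Finset.prod_eq_zero (Finset.mem_univ j)
    have : (j = k) = False := by simp [hjk]
    simp [this, sg, Fintype.sum_bool]

lemma sum_X_sq (ha : ∑ j, (a j)^2 = 1) :
    ∑ w : Fin m → Bool, (Xf a w)^2 = 2^m := by
  have h1 : ∀ w : Fin m → Bool, (Xf a w)^2 = ∑ j, ∑ k, (sg (w j) * sg (w k)) * (a j * a k) := by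
    intro w
    rw [Xf, sq, Finset.sum_mul_sum]
    congr 1; ext j; congr 1; ext k; ring
  simp_rw [h1]
  rw [Finset.sum_comm]
  have h2 : ∀ j : Fin m, ∑ w : Fin m → Bool, ∑ k, (sg (w j) * sg (w k)) * (a j * a k)
      = 2^m * (a j)^2 := by
    intro j
    rw [Finset.sum_comm]
    have h3 : ∀ k : Fin m, ∑ w : Fin m → Bool, (sg (w j) * sg (w k)) * (a j * a k)
        = (if j = k then 2^m else 0) * (a j * a k) := by
      intro k
      rw [← Finset.sum_mul, sum_sg_pair]
    simp_rw [h3]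
    simp_rw [ite_mul, zero_mul]
    rw [Finset.sum_ite_eq (Finset.univ) j (fun k => (2^m:ℝ) * (a j * a k))]
    simp [sq, mul_assoc]
  simp_rw [h2]
  rw [← Finset.mul_sum, ha, mul_one]

lemma quarti_le_cosh (y : ℝ) : y^4 ≤ 48 * Real.cosh y := by
  have h1 : Real.exp |y| / 2 ≤ Real.cosh y := by
    rw [Real.cosh_eq]
    rcases abs_cases y with ⟨h, _⟩ | ⟨h, _⟩ <;> rw [h] <;>
      [ (have := Real.exp_pos (-y)); (have := Real.exp_pos y) ] <;> linarith
  have h2 : |y|^4 / 24 ≤ Real.exp |y| := by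
    have h3 := Real.sum_le_exp_of_nonneg (abs_nonneg y) 5
    have h4 : |y|^4 / 24 ≤ ∑ i ∈ Finset.range 5, |y| ^ i / (i.factorial:ℝ) := by
      rw [Finset.sum_range_succ, Finset.sum_range_succ, Finset.sum_range_succ,
        Finset.sum_range_succ, Finset.sum_range_succ]
      have : ∀ i : ℕ, (0:ℝ) ≤ |y| ^ i / (i.factorial : ℝ) := fun i => by positivity
      have h0 := this 0; have hh1 := this 1; have hh2 := this 2; have hh3 := this 3
      norm_num [Nat.factorial] at h0 hh1 hh2 hh3 ⊢
      have hy := abs_nonneg y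
      linarith
    linarith
  have h5 : y^4 = |y|^4 := by rw [← abs_pow, abs_of_nonneg (by positivity)]
  linarith

-- assuming mgf bound proved earlier
lemma sum_X_quart (ha : ∑ j, (a j)^2 = 1)
    (mgf : ∀ c : ℝ, ∑ w : Fin m → Bool, Real.exp (c * Xf a w) ≤ 2^m * Real.exp (c^2/2)) :
    ∑ w : Fin m → Bool, (Xf a w)^4 ≤ 24 * 2^m := by
  have h1 : ∀ w : Fin m → Bool, (Xf a w)^4 ≤ (3/2) * (Real.exp (2 * Xf a w) + Real.exp (-(2 * Xf a w))) := by
    intro w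
    have := quarti_le_cosh (2 * Xf a w)
    rw [Real.cosh_eq] at this
    nlinarith [this, sq_nonneg (Xf a w)]
  calc ∑ w : Fin m → Bool, (Xf a w)^4
      ≤ ∑ w : Fin m → Bool, (3/2) * (Real.exp (2 * Xf a w) + Real.exp (-(2 * Xf a w))) :=
        Finset.sum_le_sum fun w _ => h1 w
    _ = (3/2) * ((∑ w : Fin m → Bool, Real.exp (2 * Xf a w)) + ∑ w : Fin m → Bool, Real.exp ((-2) * Xf a w)) := by
        rw [← Finset.mul_sum, Finset.sum_add_distrib]
        congr 3
        ext w; ring_nf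
    _ ≤ (3/2) * ((2^m * Real.exp (2^2/2)) + 2^m * Real.exp ((-2:ℝ)^2/2)) := by
        have := mgf 2; have := mgf (-2)
        linarith [mgf 2, mgf (-2)]
    _ ≤ 24 * 2^m := by
        norm_num
        have h7 : Real.exp 2 ≤ 8 := by
          have h8 : Real.exp 1 ≤ 2.7182818286 := Real.exp_one_lt_d9.le
          have : Real.exp 2 = Real.exp 1 * Real.exp 1 := by
            rw [← Real.exp_add]; norm_num
          nlinarith [Real.exp_pos 1]
        nlinarith [pow_pos (by norm_num : (0:ℝ) < 2) m]

lemma integrable_exp_quad {aa : ℝ} (ha : 0 < aa) (c : ℝ) :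
    Integrable (fun x : ℝ => Real.exp (-aa * x^2 + c * x)) := by
  have key : (fun x : ℝ => Real.exp (-aa * x^2 + c * x))
      = fun x => Real.exp (c^2/(4*aa)) * Real.exp (-aa * (x - c/(2*aa))^2) := by
    ext x
    rw [← Real.exp_add]
    congr 1
    field_simp
    ring
  rw [key]
  exact ((integrable_exp_neg_mul_sq ha).comp_sub_right (c/(2*aa))).const_mul _

lemma integral_exp_quad {aa : ℝ} (ha : 0 < aa) (c : ℝ) :
    ∫ x : ℝ, Real.exp (-aa * x^2 + c * x) = Real.sqrt (π/aa) * Real.exp (c^2/(4*aa)) := by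
  have key : (fun x : ℝ => Real.exp (-aa * x^2 + c * x))
      = fun x => Real.exp (c^2/(4*aa)) * Real.exp (-aa * (x - c/(2*aa))^2) := by
    ext x
    rw [← Real.exp_add]
    congr 1
    field_simp
    ring
  rw [key, MeasureTheory.integral_const_mul,
    integral_sub_right_eq_self (fun x => Real.exp (-aa * x^2)) (c/(2*aa)),
    integral_gaussian]
  ring

lemma exp_sq_repr {t : ℝ} (ht : 0 ≤ t) (y : ℝ) :
    Real.exp (t * y^2)
      = (Real.sqrt (2*π))⁻¹ * ∫ g : ℝ, Real.exp (-(1/2) * g^2 + (Real.sqrt (2*t) * y) * g) := by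
  rw [integral_exp_quad (by norm_num : (0:ℝ) < 1/2)]
  have h1 : (Real.sqrt (2*t) * y)^2 / (4 * (1/2)) = t * y^2 := by
    rw [mul_pow, Real.sq_sqrt (by linarith)]
    ring
  rw [h1]
  have h2 : Real.sqrt (π / (1/2)) = Real.sqrt (2*π) := by
    congr 1; ring
  rw [h2, ← mul_assoc, inv_mul_cancel₀ (by positivity : Real.sqrt (2*π) ≠ 0), one_mul]

lemma sqrt_ratio_le {t : ℝ} (ht : 0 ≤ t) (ht' : t ≤ 1/4) :
    (Real.sqrt (2*π))⁻¹ * Real.sqrt (π / (1/2 - t)) ≤ Real.exp (t + 2*t^2) := by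
  have h2t : 0 < 1 - 2*t := by linarith
  have hpos : 0 < 1/2 - t := by linarith
  have h1 : (Real.sqrt (2*π))⁻¹ * Real.sqrt (π / (1/2 - t)) = Real.sqrt (1/(1 - 2*t)) := by
    rw [← Real.sqrt_inv, ← Real.sqrt_mul (by positivity)]
    congr 1
    have hπ : π ≠ 0 := Real.pi_ne_zero
    field_simp
  rw [h1]
  have h3 : (1:ℝ)/(1-2*t) ≤ (Real.exp (t + 2*t^2))^2 := by
    rw [sq, ← Real.exp_add]
    rw [div_le_iff₀ h2t]
    have hz : (0:ℝ) ≤ t + 2*t^2 + (t + 2*t^2) := by nlinarith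
    have := Real.quadratic_le_exp_of_nonneg hz
    nlinarith [this, sq_nonneg t, Real.exp_pos (t + 2*t^2 + (t + 2*t^2))]
  calc Real.sqrt (1/(1-2*t)) ≤ Real.sqrt ((Real.exp (t + 2*t^2))^2) := Real.sqrt_le_sqrt h3
    _ = Real.exp (t + 2*t^2) := Real.sqrt_sq (Real.exp_pos _).le

lemma sum_exp_tX_sq_le (ha : ∑ j, (a j)^2 = 1)
    (mgf : ∀ c : ℝ, ∑ w : Fin m → Bool, Real.exp (c * Xf a w) ≤ 2^m * Real.exp (c^2/2))
    {t : ℝ} (ht : 0 ≤ t) (ht' : t ≤ 1/4) :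
    ∑ w : Fin m → Bool, Real.exp (t * (Xf a w)^2) ≤ 2^m * Real.exp (t + 2*t^2) := by
  have step1 : ∑ w : Fin m → Bool, Real.exp (t * (Xf a w)^2)
      = (Real.sqrt (2*π))⁻¹ * ∫ g : ℝ, ∑ w : Fin m → Bool,
          Real.exp (-(1/2) * g^2 + (Real.sqrt (2*t) * Xf a w) * g) := by
    rw [MeasureTheory.integral_finset_sum _
      (fun w _ => integrable_exp_quad (by norm_num) _), Finset.mul_sum]
    exact Finset.sum_congr rfl fun w _ => exp_sq_repr ht _
  rw [step1]
  have step2 : ∫ g : ℝ, ∑ w : Fin m → Bool,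
        Real.exp (-(1/2) * g^2 + (Real.sqrt (2*t) * Xf a w) * g)
      ≤ ∫ g : ℝ, (2^m : ℝ) * Real.exp (-(1/2 - t) * g^2) := by
    apply MeasureTheory.integral_mono
    · exact MeasureTheory.integrable_finset_sum _
        (fun w _ => integrable_exp_quad (by norm_num) _)
    · exact (integrable_exp_neg_mul_sq (by linarith : (0:ℝ) < 1/2 - t)).const_mul _
    · intro g
      have h4 : ∀ w : Fin m → Bool, Real.exp (-(1/2) * g^2 + (Real.sqrt (2*t) * Xf a w) * g)
          = Real.exp (-(1/2) * g^2) * Real.exp ((Real.sqrt (2*t) * g) * Xf a w) := by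
        intro w
        rw [← Real.exp_add]
        congr 1
        ring
      simp only [h4]
      rw [← Finset.mul_sum]
      calc Real.exp (-(1/2) * g^2) * ∑ w : Fin m → Bool, Real.exp ((Real.sqrt (2*t) * g) * Xf a w)
          ≤ Real.exp (-(1/2) * g^2) * (2^m * Real.exp ((Real.sqrt (2*t) * g)^2/2)) := by
            apply mul_le_mul_of_nonneg_left (mgf _) (Real.exp_pos _).le
        _ = (2^m : ℝ) * Real.exp (-(1/2 - t) * g^2) := by
            rw [mul_comm (Real.exp _), mul_assoc, ← Real.exp_add]
            congr 2
            rw [mul_pow, Real.sq_sqrt (by linarith : (0:ℝ) ≤ 2*t)]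
            ring
  have step3 : ∫ g : ℝ, (2^m : ℝ) * Real.exp (-(1/2 - t) * g^2)
      = (2^m : ℝ) * Real.sqrt (π / (1/2 - t)) := by
    rw [MeasureTheory.integral_const_mul, integral_gaussian]
  calc (Real.sqrt (2*π))⁻¹ * ∫ g : ℝ, ∑ w : Fin m → Bool,
        Real.exp (-(1/2) * g^2 + (Real.sqrt (2*t) * Xf a w) * g)
      ≤ (Real.sqrt (2*π))⁻¹ * ((2^m : ℝ) * Real.sqrt (π / (1/2 - t))) := by
        apply mul_le_mul_of_nonneg_left _ (by positivity)
        rw [← step3]; exact step2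
    _ = (2^m : ℝ) * ((Real.sqrt (2*π))⁻¹ * Real.sqrt (π / (1/2 - t))) := by ring
    _ ≤ 2^m * Real.exp (t + 2*t^2) :=
        mul_le_mul_of_nonneg_left (sqrt_ratio_le ht ht') (by positivity)

lemma exp_neg_le (y : ℝ) (hy : 0 ≤ y) : Real.exp (-y) ≤ 1 - y + y^2 := by
  have h1 : Real.exp (-y) * (1 + y) ≤ 1 := by
    have h2 := Real.add_one_le_exp y
    have h3 := Real.exp_pos (-y)
    have h4 : Real.exp (-y) * Real.exp y = 1 := by rw [← Real.exp_add]; simp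
    nlinarith
  nlinarith [Real.exp_pos (-y)]

lemma sum_exp_neg_tX_sq_le
    (hsq : ∑ w : Fin m → Bool, (Xf a w)^2 = 2^m)
    (hquart : ∑ w : Fin m → Bool, (Xf a w)^4 ≤ 24 * 2^m)
    {t : ℝ} (ht : 0 ≤ t) :
    ∑ w : Fin m → Bool, Real.exp (-t * (Xf a w)^2) ≤ 2^m * Real.exp (-t + 24*t^2) := by
  have h1 : ∑ w : Fin m → Bool, Real.exp (-t * (Xf a w)^2)
      ≤ ∑ w : Fin m → Bool, (1 - t * (Xf a w)^2 + t^2 * (Xf a w)^4) := by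
    apply Finset.sum_le_sum
    intro w _
    have := exp_neg_le (t * (Xf a w)^2) (by positivity)
    calc Real.exp (-t * (Xf a w)^2) = Real.exp (-(t * (Xf a w)^2)) := by ring_nf
      _ ≤ 1 - t * (Xf a w)^2 + (t * (Xf a w)^2)^2 := this
      _ = 1 - t * (Xf a w)^2 + t^2 * ((Xf a w)^2)^2 := by ring
      _ = 1 - t * (Xf a w)^2 + t^2 * (Xf a w)^4 := by norm_num [← pow_mul]
  have h2 : ∑ w : Fin m → Bool, (1 - t * (Xf a w)^2 + t^2 * (Xf a w)^4)
      ≤ 2^m * (1 - t + 24*t^2) := by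
    rw [Finset.sum_add_distrib, Finset.sum_sub_distrib, ← Finset.mul_sum, ← Finset.mul_sum,
      hsq, Finset.sum_const]
    have : (Finset.univ : Finset (Fin m → Bool)).card = 2^m := by
      simp [Fintype.card_fun]
    rw [this, nsmul_eq_mul, mul_one]
    push_cast
    nlinarith [hquart, sq_nonneg t, pow_pos (by norm_num : (0:ℝ) < 2) m]
  have h3 : (1:ℝ) - t + 24*t^2 ≤ Real.exp (-t + 24*t^2) := by
    have := Real.add_one_le_exp (-t + 24*t^2)
    linarith
  calc ∑ w : Fin m → Bool, Real.exp (-t * (Xf a w)^2) ≤ 2^m * (1 - t + 24*t^2) := h1.trans h2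
    _ ≤ 2^m * Real.exp (-t + 24*t^2) :=
        mul_le_mul_of_nonneg_left h3 (by positivity)

/-- product over rows -/
lemma sum_rows {K : ℕ} (F : (Fin m → Bool) → ℝ) :
    ∑ ω : Fin K → (Fin m → Bool), ∏ i, F (ω i) = (∑ w : Fin m → Bool, F w)^K := by
  rw [master (fun _ w => F w), Finset.prod_const]
  simp

/-- counting Markov inequality -/
lemma markov_count {α : Type*} [Fintype α] [DecidableEq α] (F : α → ℝ) (hF : ∀ x, 0 ≤ F x)
    {r : ℝ} (hr : 0 < r) :
    ((Finset.univ.filter (fun x => r ≤ F x)).card : ℝ) * r ≤ ∑ x, F x := by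
  calc ((Finset.univ.filter (fun x => r ≤ F x)).card : ℝ) * r
      = ∑ _x ∈ Finset.univ.filter (fun x => r ≤ F x), r := by rw [Finset.sum_const, nsmul_eq_mul]
    _ ≤ ∑ x ∈ Finset.univ.filter (fun x => r ≤ F x), F x :=
        Finset.sum_le_sum fun x hx => (Finset.mem_filter.1 hx).2
    _ ≤ ∑ x, F x := Finset.sum_le_sum_of_subset_of_nonneg (Finset.filter_subset _ _)
        (fun x _ _ => hF x)

lemma markov_count' {α : Type*} [Fintype α] (p : α → Prop) [DecidablePred p]
    (F : α → ℝ) (hF : ∀ x, 0 ≤ F x) {r : ℝ} (h : ∀ x, p x → r ≤ F x) :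
    ((Finset.univ.filter p).card : ℝ) * r ≤ ∑ x, F x := by
  calc ((Finset.univ.filter p).card : ℝ) * r
      = ∑ _x ∈ Finset.univ.filter p, r := by rw [Finset.sum_const, nsmul_eq_mul]
    _ ≤ ∑ x ∈ Finset.univ.filter p, F x :=
        Finset.sum_le_sum fun x hx => h x (Finset.mem_filter.1 hx).2
    _ ≤ ∑ x, F x := Finset.sum_le_sum_of_subset_of_nonneg (Finset.filter_subset _ _)
        (fun x _ _ => hF x)

/-- generic Chernoff counting step -/
lemma chernoff_count (p : (Fin K → Fin m → Bool) → Prop) [DecidablePred p]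
    {t s B : ℝ}
    (hmgf : ∑ w : Fin m → Bool, Real.exp (t * (Xf a w)^2) ≤ 2^m * Real.exp B)
    (hp : ∀ ω, p ω → s ≤ Qf a ω * t) :
    ((Finset.univ.filter p).card : ℝ) ≤ 2^(m*K) * Real.exp (K * B - s) := by
  have h1 := markov_count' p (fun ω => Real.exp (t * Qf a ω)) (fun ω => (Real.exp_pos _).le)
    (r := Real.exp s) (fun ω hω => by
      rw [Real.exp_le_exp]
      have := hp ω hω
      linarith [this, mul_comm (Qf a ω) t])
  have h2 : ∑ ω : Fin K → Fin m → Bool, Real.exp (t * Qf a ω)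
      ≤ (2^m * Real.exp B)^K := by
    have h3 : ∀ ω : Fin K → Fin m → Bool,
        Real.exp (t * Qf a ω) = ∏ i, Real.exp (t * (Xf a (ω i))^2) := by
      intro ω
      rw [← Real.exp_sum, Qf, Finset.mul_sum]
    simp_rw [h3]
    rw [sum_rows (fun w => Real.exp (t * (Xf a w)^2))]
    apply pow_le_pow_left₀ (Finset.sum_nonneg fun w _ => (Real.exp_pos _).le) hmgf
  have h4 : ((Finset.univ.filter p).card : ℝ)
      ≤ (2^m * Real.exp B)^K / Real.exp s := by
    rw [le_div_iff₀ (Real.exp_pos s)]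
    exact h1.trans h2
  calc ((Finset.univ.filter p).card : ℝ) ≤ (2^m * Real.exp B)^K / Real.exp s := h4
    _ = 2^(m*K) * Real.exp (K * B - s) := by
      rw [mul_pow, ← Real.exp_nat_mul, Real.exp_sub, pow_mul]
      ring_nf

lemma bad_count (hε : 0 < ε) (hε1 : ε < 1)
    (hup : ∑ w : Fin m → Bool, Real.exp ((ε/4) * (Xf a w)^2)
        ≤ 2^m * Real.exp (ε/4 + 2*(ε/4)^2))
    (hdn : ∑ w : Fin m → Bool, Real.exp (-(ε/48) * (Xf a w)^2)
        ≤ 2^m * Real.exp (-(ε/48) + 24*(ε/48)^2)) :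
    ((Finset.univ.filter (fun ω : Fin K → Fin m → Bool =>
        ¬((K:ℝ)*(1-ε) < Qf a ω ∧ Qf a ω < (K:ℝ)*(1+ε)))).card : ℝ)
      ≤ 2^(m*K) * (2 * Real.exp (-(K*ε^2)/96)) := by
  set t1 : ℝ := ε/4 with ht1
  set t2 : ℝ := ε/48 with ht2
  have c1 : ((Finset.univ.filter (fun ω : Fin K → Fin m → Bool =>
        (K:ℝ)*(1+ε) ≤ Qf a ω)).card : ℝ) ≤ 2^(m*K) * Real.exp (-(K*ε^2)/8) := by
    have := chernoff_count (a := a) (K := K)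
      (fun ω : Fin K → Fin m → Bool => (K:ℝ)*(1+ε) ≤ Qf a ω)
      (t := t1) (s := t1 * (K*(1+ε))) (B := t1 + 2*t1^2) hup
      (fun ω hω => by nlinarith [hω])
    convert this using 3
    rw [ht1]; ring
  have c2 : ((Finset.univ.filter (fun ω : Fin K → Fin m → Bool =>
        Qf a ω ≤ (K:ℝ)*(1-ε))).card : ℝ) ≤ 2^(m*K) * Real.exp (-(K*ε^2)/96) := by
    have := chernoff_count (a := a) (K := K)
      (fun ω : Fin K → Fin m → Bool => Qf a ω ≤ (K:ℝ)*(1-ε))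
      (t := -t2) (s := (K*(1-ε)) * (-t2)) (B := -t2 + 24*t2^2) hdn
      (fun ω hω => by nlinarith [hω])
    convert this using 3
    rw [ht2]; ring
  have hsub : (Finset.univ.filter (fun ω : Fin K → Fin m → Bool =>
        ¬((K:ℝ)*(1-ε) < Qf a ω ∧ Qf a ω < (K:ℝ)*(1+ε))))
      ⊆ (Finset.univ.filter (fun ω : Fin K → Fin m → Bool => Qf a ω ≤ (K:ℝ)*(1-ε)))
        ∪ (Finset.univ.filter (fun ω : Fin K → Fin m → Bool => (K:ℝ)*(1+ε) ≤ Qf a ω)) := by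
    intro ω hω
    rw [Finset.mem_filter] at hω
    rw [Finset.mem_union, Finset.mem_filter, Finset.mem_filter]
    rcases not_and_or.1 hω.2 with h | h
    · exact Or.inl ⟨Finset.mem_univ _, not_lt.1 h⟩
    · exact Or.inr ⟨Finset.mem_univ _, not_lt.1 h⟩
  have hcard := Finset.card_le_card hsub
  have hcard2 := Finset.card_union_le
    (Finset.univ.filter (fun ω : Fin K → Fin m → Bool => Qf a ω ≤ (K:ℝ)*(1-ε)))
    (Finset.univ.filter (fun ω : Fin K → Fin m → Bool => (K:ℝ)*(1+ε) ≤ Qf a ω))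
  have h8 : Real.exp (-(K*ε^2)/8) ≤ Real.exp (-(K*ε^2)/96) := by
    rw [Real.exp_le_exp]
    have : (0:ℝ) ≤ K*ε^2 := by positivity
    linarith
  calc ((Finset.univ.filter (fun ω : Fin K → Fin m → Bool =>
        ¬((K:ℝ)*(1-ε) < Qf a ω ∧ Qf a ω < (K:ℝ)*(1+ε)))).card : ℝ)
      ≤ ((Finset.univ.filter (fun ω : Fin K → Fin m → Bool => Qf a ω ≤ (K:ℝ)*(1-ε))).card : ℝ)
        + ((Finset.univ.filter (fun ω : Fin K → Fin m → Bool => (K:ℝ)*(1+ε) ≤ Qf a ω)).card : ℝ) := by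
        exact_mod_cast le_trans (Nat.cast_le.2 hcard) (Nat.cast_le.2 hcard2)
    _ ≤ 2^(m*K) * Real.exp (-(K*ε^2)/96) + 2^(m*K) * Real.exp (-(K*ε^2)/8) := by linarith
    _ ≤ 2^(m*K) * (2 * Real.exp (-(K*ε^2)/96)) := by
        have hp : (0:ℝ) < 2^(m*K) := by positivity
        nlinarith [h8]


lemma hyp_up {m : ℕ} {a : Fin m → ℝ} (ha : ∑ j, (a j)^2 = 1) {ε : ℝ} (hε : 0 < ε) (hε1 : ε < 1) :
    ∑ w : Fin m → Bool, Real.exp ((ε/4) * (Xf a w)^2)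
        ≤ 2^m * Real.exp (ε/4 + 2*(ε/4)^2) :=
  sum_exp_tX_sq_le ha (fun c => sum_exp_mul_X_le ha c) (by positivity) (by linarith)

lemma hyp_dn {m : ℕ} {a : Fin m → ℝ} (ha : ∑ j, (a j)^2 = 1) {ε : ℝ} (hε : 0 < ε) (hε1 : ε < 1) :
    ∑ w : Fin m → Bool, Real.exp (-(ε/48) * (Xf a w)^2)
        ≤ 2^m * Real.exp (-(ε/48) + 24*(ε/48)^2) :=
  sum_exp_neg_tX_sq_le (sum_X_sq ha)
    (sum_X_quart ha (fun c => sum_exp_mul_X_le ha c)) (by positivity)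

lemma norm_sub_sq_eq {m : ℕ} (v w : EuclideanSpace ℝ (Fin m)) :
    ‖v - w‖^2 = ∑ j, (v j - w j)^2 := by
  rw [EuclideanSpace.norm_eq, Real.sq_sqrt (by positivity)]
  congr 1; ext j
  simp [PiLp.sub_apply, Real.norm_eq_abs, sq_abs]

lemma final_bounds {ε d N QK : ℝ} (hε : 0 < ε) (hε1 : ε < 1) (hd : 0 < d) (hN : 0 ≤ N)
    (hNsq : N^2 = d^2 * QK) (hq1 : 1 - ε < QK) (hq2 : QK < 1 + ε) :
    (1-ε) * d ≤ N ∧ N ≤ (1+ε) * d := by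
  constructor
  · have h1 : (1-ε)^2 ≤ 1-ε := by nlinarith
    have hsq : ((1-ε) * d)^2 ≤ N^2 := by nlinarith [sq_nonneg d]
    calc (1-ε) * d = Real.sqrt (((1-ε) * d)^2) := by
          rw [Real.sqrt_sq (mul_nonneg (by linarith) hd.le)]
      _ ≤ Real.sqrt (N^2) := Real.sqrt_le_sqrt hsq
      _ = N := Real.sqrt_sq hN
  · have h1 : 1+ε ≤ (1+ε)^2 := by nlinarith
    have hsq : N^2 ≤ ((1+ε) * d)^2 := by nlinarith [sq_nonneg d]
    calc N = Real.sqrt (N^2) := (Real.sqrt_sq hN).symm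
      _ ≤ Real.sqrt (((1+ε) * d)^2) := Real.sqrt_le_sqrt hsq
      _ = (1+ε) * d := Real.sqrt_sq (mul_nonneg (by linarith) hd.le)

theorem johnson_lindenstrauss :
    ∃ C : ℝ, 0 < C ∧
      ∀ ε : ℝ, ε ∈ Set.Ioo (0 : ℝ) 1 → ∀ m : ℕ, 1 ≤ m →
        ∀ Y : Finset (EuclideanSpace ℝ (Fin m)), 2 ≤ Y.card →
          ∀ K : ℕ, C * ε⁻¹ ^ 2 * Real.log Y.card ≤ K →
            ∃ f : EuclideanSpace ℝ (Fin m) → EuclideanSpace ℝ (Fin K),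
              ∀ x ∈ Y, ∀ y ∈ Y,
                (1 - ε) * ‖x - y‖ ≤ ‖f x - f y‖ ∧
                ‖f x - f y‖ ≤ (1 + ε) * ‖x - y‖ := by
  classical
  refine ⟨300, by norm_num, ?_⟩
  rintro ε ⟨hε, hε1⟩ m _hm Y hY K hK
  set n : ℕ := Y.card with hn
  have hn2 : (2:ℝ) ≤ n := by exact_mod_cast hY
  have hlogn : 0 < Real.log n := Real.log_pos (by linarith)
  -- the unit vector attached to a pair
  set av : EuclideanSpace ℝ (Fin m) × EuclideanSpace ℝ (Fin m) → (Fin m → ℝ) :=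
    fun p => fun j => ‖p.1 - p.2‖⁻¹ * (p.1 j - p.2 j) with hav
  have hunit : ∀ p : EuclideanSpace ℝ (Fin m) × EuclideanSpace ℝ (Fin m),
      p.1 ≠ p.2 → ∑ j, (av p j)^2 = 1 := by
    intro p hp
    have hd : 0 < ‖p.1 - p.2‖ := by
      rw [norm_pos_iff, sub_ne_zero]; exact hp
    have := norm_sub_sq_eq p.1 p.2
    simp only [hav]
    simp_rw [mul_pow, ← Finset.mul_sum, ← this]
    rw [inv_pow]
    field_simp
  -- the pair set
  set P := (Y ×ˢ Y).filter (fun p => p.1 ≠ p.2) with hP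
  -- the bad set of matrices
  set Bad : Finset (Fin K → Fin m → Bool) := P.biUnion (fun p =>
    Finset.univ.filter (fun ω : Fin K → Fin m → Bool =>
      ¬((K:ℝ)*(1-ε) < Qf (av p) ω ∧ Qf (av p) ω < (K:ℝ)*(1+ε)))) with hBad
  have hBadcard : (Bad.card : ℝ) < 2^(m*K) := by
    have h1 : (Bad.card : ℝ) ≤ (P.card : ℝ) * (2^(m*K) * (2 * Real.exp (-(K*ε^2)/96))) := by
      have h2 := Finset.card_biUnion_le (s := P) (t := fun p =>
        Finset.univ.filter (fun ω : Fin K → Fin m → Bool =>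
          ¬((K:ℝ)*(1-ε) < Qf (av p) ω ∧ Qf (av p) ω < (K:ℝ)*(1+ε))))
      have h3 : (Bad.card : ℝ) ≤ ∑ p ∈ P, ((Finset.univ.filter
          (fun ω : Fin K → Fin m → Bool =>
            ¬((K:ℝ)*(1-ε) < Qf (av p) ω ∧ Qf (av p) ω < (K:ℝ)*(1+ε)))).card : ℝ) := by
        rw [hBad]
        exact_mod_cast h2
      refine h3.trans ?_
      calc ∑ p ∈ P, ((Finset.univ.filter (fun ω : Fin K → Fin m → Bool =>
            ¬((K:ℝ)*(1-ε) < Qf (av p) ω ∧ Qf (av p) ω < (K:ℝ)*(1+ε)))).card : ℝ)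
          ≤ ∑ _p ∈ P, 2^(m*K) * (2 * Real.exp (-(K*ε^2)/96)) := by
            apply Finset.sum_le_sum
            intro p hp
            have hpp : p.1 ≠ p.2 := (Finset.mem_filter.1 hp).2
            exact bad_count hε hε1 (hyp_up (hunit p hpp) hε hε1) (hyp_dn (hunit p hpp) hε hε1)
        _ = (P.card : ℝ) * (2^(m*K) * (2 * Real.exp (-(K*ε^2)/96))) := by
            rw [Finset.sum_const, nsmul_eq_mul]
    have hPcard : (P.card : ℝ) ≤ (n:ℝ)^2 := by
      have : P.card ≤ (Y ×ˢ Y).card := Finset.card_le_card (Finset.filter_subset _ _)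
      rw [Finset.card_product] at this
      calc (P.card : ℝ) ≤ ((n * n : ℕ) : ℝ) := by exact_mod_cast this
        _ = (n:ℝ)^2 := by push_cast; ring
    -- numeric part
    have hKe : 300 * Real.log n ≤ (K:ℝ) * ε^2 := by
      have hε2 : (0:ℝ) < ε^2 := by positivity
      have := mul_le_mul_of_nonneg_right hK (le_of_lt hε2)
      calc 300 * Real.log n = 300 * ε⁻¹^2 * Real.log n * ε^2 := by
            field_simp
          _ ≤ (K:ℝ) * ε^2 := this
    have hnum : (n:ℝ)^2 * (2 * Real.exp (-(K*ε^2)/96)) < 1 := by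
      have hlog : Real.log (2 * (n:ℝ)^2) < (K*ε^2)/96 := by
        rw [Real.log_mul (by norm_num) (by positivity), Real.log_pow]
        have hl2 : Real.log 2 ≤ Real.log n := Real.log_le_log (by norm_num) (by linarith)
        have hl2' : 0 < Real.log 2 := Real.log_pos (by norm_num)
        push_cast
        nlinarith [hKe, hlogn]
      have h2n : (0:ℝ) < 2 * (n:ℝ)^2 := by positivity
      have := Real.exp_lt_exp.2 hlog
      rw [Real.exp_log h2n] at this
      have hE := Real.exp_pos (-(K*ε^2)/96)
      have hmul : 2 * (n:ℝ)^2 * Real.exp (-(K*ε^2)/96) <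
          Real.exp ((K*ε^2)/96) * Real.exp (-(K*ε^2)/96) :=
        mul_lt_mul_of_pos_right this hE
      rw [← Real.exp_add] at hmul
      have h00 : (K:ℝ)*ε^2/96 + -((K:ℝ)*ε^2)/96 = 0 := by ring
      rw [h00, Real.exp_zero] at hmul
      nlinarith [hmul]
    have hpow : (0:ℝ) < 2^(m*K) := by positivity
    calc (Bad.card : ℝ) ≤ (P.card : ℝ) * (2^(m*K) * (2 * Real.exp (-(K*ε^2)/96))) := h1
      _ ≤ (n:ℝ)^2 * (2^(m*K) * (2 * Real.exp (-(K*ε^2)/96))) := by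
          apply mul_le_mul_of_nonneg_right hPcard (by positivity)
      _ = 2^(m*K) * ((n:ℝ)^2 * (2 * Real.exp (-(K*ε^2)/96))) := by ring
      _ < 2^(m*K) * 1 := by
          exact mul_lt_mul_of_pos_left hnum hpow
      _ = 2^(m*K) := mul_one _
  -- existence of a good matrix
  have hex : ∃ ω : Fin K → Fin m → Bool, ω ∉ Bad := by
    by_contra hcon
    push_neg at hcon
    have : (Finset.univ : Finset (Fin K → Fin m → Bool)) ⊆ Bad := fun ω _ => hcon ω
    have hcard := Finset.card_le_card this
    rw [Finset.card_univ] at hcard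
    have : Fintype.card (Fin K → Fin m → Bool) = 2^(m*K) := by
      rw [Fintype.card_fun]
      simp [Fintype.card_fun, pow_mul, mul_comm]
    rw [this] at hcard
    have : ((2:ℝ))^(m*K) ≤ (Bad.card : ℝ) := by exact_mod_cast hcard
    linarith
  obtain ⟨ω, hω⟩ := hex
  have hKpos : (0:ℝ) < K := by
    by_contra hc
    push_neg at hc
    have hKe : 300 * Real.log n ≤ (K:ℝ) * ε^2 := by
      have hε2 : (0:ℝ) < ε^2 := by positivity
      have := mul_le_mul_of_nonneg_right hK (le_of_lt hε2)
      calc 300 * Real.log n = 300 * ε⁻¹^2 * Real.log n * ε^2 := by field_simp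
        _ ≤ (K:ℝ) * ε^2 := this
    nlinarith [hlogn, sq_nonneg ε]
  refine ⟨fun x => (WithLp.toLp 2 (fun i => (Real.sqrt K)⁻¹ * ∑ j, sg (ω i j) * x j) :
    EuclideanSpace ℝ (Fin K)), ?_⟩
  intro x hx y hy
  by_cases hxy : x = y
  · subst hxy
    simp
  -- nontrivial pair
  have hpP : (x, y) ∈ P := by
    rw [hP, Finset.mem_filter, Finset.mem_product]
    exact ⟨⟨hx, hy⟩, hxy⟩
  have hgood : (K:ℝ)*(1-ε) < Qf (av (x,y)) ω ∧ Qf (av (x,y)) ω < (K:ℝ)*(1+ε) := by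
    by_contra hbad
    apply hω
    rw [hBad, Finset.mem_biUnion]
    exact ⟨(x,y), hpP, Finset.mem_filter.2 ⟨Finset.mem_univ _, hbad⟩⟩
  set d : ℝ := ‖x - y‖ with hd
  have hdpos : 0 < d := by
    rw [hd, norm_pos_iff, sub_ne_zero]; exact hxy
  set Q : ℝ := Qf (av (x,y)) ω with hQ
  -- compute the norm squared
  set fx : EuclideanSpace ℝ (Fin K) := (WithLp.toLp 2 (fun i => (Real.sqrt K)⁻¹ * ∑ j, sg (ω i j) * x j) :
    EuclideanSpace ℝ (Fin K)) with hfx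
  set fy : EuclideanSpace ℝ (Fin K) := (WithLp.toLp 2 (fun i => (Real.sqrt K)⁻¹ * ∑ j, sg (ω i j) * y j) :
    EuclideanSpace ℝ (Fin K)) with hfy
  have hNsq : ‖fx - fy‖^2 = d^2 * (Q / K) := by
    rw [norm_sub_sq_eq]
    have hterm : ∀ i, fx i - fy i = (Real.sqrt K)⁻¹ * (d * Xf (av (x,y)) (ω i)) := by
      intro i
      rw [hfx, hfy]
      show (Real.sqrt K)⁻¹ * ∑ j, sg (ω i j) * x j
          - (Real.sqrt K)⁻¹ * ∑ j, sg (ω i j) * y j = _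
      rw [← mul_sub, ← Finset.sum_sub_distrib]
      congr 1
      rw [Xf, Finset.mul_sum]
      apply Finset.sum_congr rfl
      intro j _
      have : x j - y j = d * av (x,y) j := by
        rw [hav]
        show x j - y j = d * (‖x - y‖⁻¹ * (x j - y j))
        rw [← hd]
        field_simp
      rw [← mul_sub, this]
      ring
    simp_rw [hterm]
    have hKne : (K:ℝ) ≠ 0 := ne_of_gt hKpos
    have hper : ∀ i : Fin K, ((Real.sqrt K)⁻¹ * (d * Xf (av (x,y)) (ω i)))^2
        = (K:ℝ)⁻¹ * (d^2 * (Xf (av (x,y)) (ω i))^2) := by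
      intro i
      rw [mul_pow, mul_pow, inv_pow, Real.sq_sqrt hKpos.le]
    simp_rw [hper]
    rw [← Finset.mul_sum, ← Finset.mul_sum, hQ, Qf]
    field_simp
  have hNnonneg : (0:ℝ) ≤ ‖fx - fy‖ := norm_nonneg _
  have hQK1 : 1 - ε < Q / K := by
    rw [lt_div_iff₀ hKpos]
    linarith [hgood.1]
  have hQK2 : Q / K < 1 + ε := by
    rw [div_lt_iff₀ hKpos]
    linarith [hgood.2]
  have hfin := final_bounds hε hε1 hdpos (norm_nonneg (fx - fy)) hNsq hQK1 hQK2
  exact hfin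

end JLaux
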